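/- For every n ≥ 1, the code A_n of Construction 3 is a non-cyclic 1-skew-tolerant binary Gray code of length 2n+1 that does not contain any of the n codewords Σ_{i=1}^{j} e_{−i} + Σ_{i=1}^{n} e_i for 1 ≤ j ≤ n; moreover its first transition occurs in position n and its last transition occurs in position −n. -/

import Mathlib

/-- Codewords `c` and `d` differ exactly at coordinate `i` (1-based), by `±1` there. -/
def TransAt {m : ℕ} (c d : List (ZMod m)) (i : ℕ) : Prop :=
  1 ≤ i ∧ i ≤ c.length ∧ c.length = d.length ∧
  c.take (i-1) = d.take (i-1) ∧ c.drop i = d.drop i ∧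
  (d.getD (i-1) 0 = c.getD (i-1) 0 + 1 ∨ d.getD (i-1) 0 = c.getD (i-1) 0 - 1)

/-- Cyclic Gray code whose transition positions `δ` are integers;
position `p ∈ ℤ` corresponds to 1-based coordinate `p + o`. -/
def CyclicGrayZ {m : ℕ} (C : List (List (ZMod m))) (o : ℕ) (δ : ℕ → ℤ) : Prop :=
  C.Nodup ∧ ∀ i < C.length, ∃ j : ℕ, (j : ℤ) = δ i + o ∧
    TransAt (C.getD i []) (C.getD ((i+1) % C.length) []) j

/-- Non-cyclic Gray code with integer transition positions, offset `o`. -/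
def PathGrayZ {m : ℕ} (C : List (List (ZMod m))) (o : ℕ) (δ : ℕ → ℤ) : Prop :=
  C.Nodup ∧ ∀ i, i + 1 < C.length → ∃ j : ℕ, (j : ℤ) = δ i + o ∧
    TransAt (C.getD i []) (C.getD (i+1) []) j

/-- `B_{n+1}` from `A_n` in Construction 3: the all-zero word followed by the four blocks
`(0,A_n,1)`, `(1,reverse A_n,1)`, `(1,A_n,0)`, `(0, reverse of A_n minus first word ,0)`. -/
def buildB3 (An : List (List (ZMod 2))) (len : ℕ) : List (List (ZMod 2)) :=
  List.replicate len (0 : ZMod 2) ::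
    (An.map (fun c => 0 :: c ++ [1]) ++ An.reverse.map (fun c => 1 :: c ++ [1]) ++
     An.map (fun c => 1 :: c ++ [0]) ++ An.tail.reverse.map (fun c => 0 :: c ++ [0]))

/-- The words `Σ_{i=1}^{j} e_{-i} + Σ_{i=1}^{n} e_i`, `j = 1, …, n+1`,
as lists of length `2n+3` (positions `-(n+1), …, n+1`). -/
def newWords (n : ℕ) : List (List (ZMod 2)) :=
  (List.range (n+1)).map (fun j =>
    List.replicate (n-j) (0 : ZMod 2) ++ List.replicate (j+1) 1 ++ [0] ++
      List.replicate n 1 ++ [0])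

/-- Construction 3, codes `A_n` (length `2n+1`, positions `-n, …, n`). -/
def c3A : ℕ → List (List (ZMod 2))
  | 0 => []
  | 1 => [[0,0,0],[0,0,1],[0,1,1],[1,1,1]]
  | (n+2) =>
    let B := buildB3 (c3A (n+1)) (2*n+5)
    B.take (B.length - n) ++ newWords (n+1)

/-- Construction 3, codes `B_n` (length `2n+1`). -/
def c3B : ℕ → List (List (ZMod 2))
  | 0 => []
  | (n+1) => buildB3 (c3A n) (2*n+3)

namespace SkewAux

abbrev Wd := List (ZMod 2)

lemma z2 (x : ZMod 2) : x + 1 + 1 = x := by revert x; decide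

lemma z2ne (x : ZMod 2) : x ≠ x + 1 := by revert x; decide

def D (c d : Wd) (k : ℕ) : Prop :=
  ∃ p x s, List.length p = k ∧ c = p ++ x :: s ∧ d = p ++ (x+1) :: s

def w (x y : ZMod 2) (c : Wd) : Wd := x :: c ++ [y]

lemma w_inj {x y x' y' : ZMod 2} {c c' : Wd} (h : w x y c = w x' y' c') :
    x = x' ∧ c = c' ∧ y = y' := by
  unfold w at h
  injection h with h1 h2
  have hy : y = y' := by
    have := congrArg List.getLast? h2
    simpa [List.getLast?_concat] using this
  subst hy
  exact ⟨h1, List.append_cancel_right h2, rfl⟩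

lemma w_injective (x y : ZMod 2) : Function.Injective (w x y) :=
  fun _ _ h => (w_inj h).2.1

lemma w_head (x y : ZMod 2) (c : Wd) : (w x y c).head? = some x := rfl

lemma w_ne_head {x y x' y' : ZMod 2} {c c' : Wd} (h : x ≠ x') : w x y c ≠ w x' y' c' :=
  fun he => h (w_inj he).1

lemma w_ne_last {x y x' y' : ZMod 2} {c c' : Wd} (h : y ≠ y') : w x y c ≠ w x' y' c' :=
  fun he => h (w_inj he).2.2

lemma w_length (x y : ZMod 2) (c : Wd) : (w x y c).length = c.length + 2 := by
  simp [w]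

def wexcl (n j : ℕ) : Wd :=
  List.replicate (n-j) (0:ZMod 2) ++ List.replicate j 1 ++ [0] ++ List.replicate n 1

lemma count_wexcl (n j : ℕ) : (wexcl n j).count 1 = j + n := by
  simp [wexcl, List.count_append, List.count_replicate, List.count_singleton]

lemma wexcl_ne_zeroword (n j k : ℕ) (hj : 1 ≤ j) :
    wexcl n j ≠ List.replicate k 0 := by
  intro h
  have := congrArg (List.count 1) h
  rw [count_wexcl] at this
  rw [List.count_replicate] at this
  simp at this
  omega

lemma wexcl_inj {n j j' : ℕ} (h : wexcl n j = wexcl n j') : j = j' := by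
  have := congrArg (List.count 1) h
  rw [count_wexcl, count_wexcl] at this
  omega

lemma D.symm {c d k} (h : D c d k) : D d c k := by
  obtain ⟨p, x, s, hl, hc, hd⟩ := h
  exact ⟨p, x+1, s, hl, hd, by rw [z2, hc]⟩

lemma D.cons {c d k} (x : ZMod 2) (h : D c d k) : D (x::c) (x::d) (k+1) := by
  obtain ⟨p, y, s, hl, hc, hd⟩ := h
  exact ⟨x::p, y, s, by simp [hl], by simp [hc], by simp [hd]⟩

lemma D.append_right {c d k} (v : Wd) (h : D c d k) : D (c++v) (d++v) k := by
  obtain ⟨p, y, s, hl, hc, hd⟩ := h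
  exact ⟨p, y, s ++ v, hl, by simp [hc], by simp [hd]⟩

lemma D.wrap {c d k} (x y : ZMod 2) (h : D c d k) :
    D (x :: c ++ [y]) (x :: d ++ [y]) (k+1) := by
  simpa using (h.append_right [y]).cons x

lemma D.length_eq {c d k} (h : D c d k) : c.length = d.length := by
  obtain ⟨p, y, s, hl, hc, hd⟩ := h; simp [hc, hd]

lemma D.lt_length {c d k} (h : D c d k) : k < c.length := by
  obtain ⟨p, y, s, hl, hc, hd⟩ := h
  simp only [hc, List.length_append, List.length_cons]; omega

lemma D.getD_self {c d k} (h : D c d k) : d.getD k 0 = c.getD k 0 + 1 := by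
  obtain ⟨p, y, s, hl, hc, hd⟩ := h
  subst hc hd hl
  rw [List.getD_append_right _ _ _ _ le_rfl, List.getD_append_right _ _ _ _ le_rfl]
  simp

lemma D.getD_ne {c d k} (h : D c d k) (i : ℕ) (hi : i ≠ k) :
    c.getD i 0 = d.getD i 0 := by
  obtain ⟨p, y, s, hl, hc, hd⟩ := h
  subst hc hd hl
  rcases lt_or_gt_of_ne hi with hlt | hgt
  · rw [List.getD_append _ _ _ _ hlt, List.getD_append _ _ _ _ hlt]
  · rw [List.getD_append_right _ _ _ _ hgt.le, List.getD_append_right _ _ _ _ hgt.le]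
    have : 1 ≤ i - p.length := by omega
    rcases Nat.exists_eq_add_of_le this with ⟨j, hj⟩
    rw [Nat.add_comm] at hj
    simp [hj]

lemma D.unique {c d k k'} (h : D c d k) (h' : D c d k') : k = k' := by
  by_contra hne
  have h1 := h.getD_self
  have h2 := h'.getD_ne k hne
  rw [h1] at h2
  exact z2ne _ h2

lemma D.transAt {c d k} (h : D c d k) : TransAt c d (k+1) := by
  obtain ⟨p, y, s, hl, hc, hd⟩ := h
  have hdg : d.getD k 0 = c.getD k 0 + 1 := D.getD_self ⟨p, y, s, hl, hc, hd⟩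
  subst hc hd hl
  refine ⟨by omega, by simp, by simp, ?_, ?_, ?_⟩
  · simp [List.take_append]
  · have : ∀ z : ZMod 2, p ++ z :: s = (p ++ [z]) ++ s := by simp
    rw [this y, this (y+1)]
    rw [show p.length + 1 = (p ++ [y]).length by simp,
      List.drop_left, show (p ++ [y]).length = (p ++ [y+1]).length by simp, List.drop_left]
  · simp only [Nat.add_sub_cancel]
    exact Or.inl hdg

/-- a Gray path with 0-based transition positions. -/
inductive Steps : List Wd → List ℕ → Prop
  | single (c : Wd) : Steps [c] []
  | cons {c d : Wd} {r : List Wd} {k : ℕ} {t : List ℕ} :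
      D c d k → Steps (d :: r) t → Steps (c :: d :: r) (k :: t)

lemma Steps.ne_nil {l t} (h : Steps l t) : l ≠ [] := by cases h <;> simp

lemma Steps.length_eq {l t} (h : Steps l t) : l.length = t.length + 1 := by
  induction h with
  | single => rfl
  | cons _ _ ih => simpa using ih

lemma Steps.getD {l t} (h : Steps l t) :
    ∀ i, i + 1 < l.length → D (l.getD i []) (l.getD (i+1) []) (t.getD i 0) := by
  induction h with
  | single => intro i hi; simp at hi
  | cons hD hS ih =>
    intro i hi
    match i with
    | 0 => simpa using hD
    | (j+1) =>
      have := ih j (by simpa using hi)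
      simpa using this

lemma Steps.map {l t} (f : Wd → Wd) (g : ℕ → ℕ)
    (hf : ∀ c d k, D c d k → D (f c) (f d) (g k)) (h : Steps l t) :
    Steps (l.map f) (t.map g) := by
  induction h with
  | single c => exact Steps.single (f c)
  | cons hD hS ih => exact Steps.cons (hf _ _ _ hD) ih

lemma Steps.snoc {l t} (h : Steps l t) {c d : Wd} {k : ℕ}
    (hc : l.getLast? = some c) (hD : D c d k) : Steps (l ++ [d]) (t ++ [k]) := by
  induction h with
  | single e =>
    simp at hc; subst hc
    exact Steps.cons hD (Steps.single d)
  | @cons c' d' r k' t' hD' hS ih =>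
    have hc' : (d' :: r).getLast? = some c := by
      rw [← hc]; symm; exact List.getLast?_cons_cons ..
    exact Steps.cons hD' (ih hc')

lemma Steps.append {l1 t1 l2 t2} (h1 : Steps l1 t1) (h2 : Steps l2 t2) {c d : Wd} {k : ℕ}
    (hc : l1.getLast? = some c) (hd : l2.head? = some d) (hD : D c d k) :
    Steps (l1 ++ l2) (t1 ++ k :: t2) := by
  induction h1 with
  | single e =>
    simp at hc; subst hc
    cases h2 with
    | single f => simp at hd; subst hd; exact Steps.cons hD (Steps.single _)
    | cons hD2 hS2 => simp at hd; subst hd; exact Steps.cons hD (Steps.cons hD2 hS2)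
  | @cons c' d' r k' t' hD' hS ih =>
    have hc' : (d' :: r).getLast? = some c := by
      rw [← hc]; symm; exact List.getLast?_cons_cons ..
    exact Steps.cons hD' (ih hc')

lemma Steps.reverse {l t} (h : Steps l t) : Steps l.reverse t.reverse := by
  induction h with
  | single c => exact Steps.single c
  | @cons c d r k t hD hS ih =>
    have : (d :: r).reverse.getLast? = some d := by
      rw [List.getLast?_reverse]; rfl
    simpa using ih.snoc this hD.symm

lemma Steps.drop {l t} (h : Steps l t) (m : ℕ) (hm : m + 1 < l.length) :
    Steps (l.drop m) (t.drop m) := by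
  induction m generalizing l t with
  | zero => simpa using h
  | succ j ih =>
    cases h with
    | single c => simp at hm
    | @cons c d r k t hD hS =>
      have := ih hS (by simp at hm ⊢; omega)
      simpa using this


lemma cons_rep_comm (k : ℕ) (a : ZMod 2) (X : Wd) :
    a :: (List.replicate k a ++ X) = List.replicate k a ++ a :: X := by
  rw [← List.cons_append, ← List.replicate_succ, List.replicate_succ', List.append_assoc]
  rfl

lemma cons_rep (k : ℕ) (a : ZMod 2) :
    a :: List.replicate k a = List.replicate k a ++ [a] := by
  simpa using cons_rep_comm k a []

lemma two_cons_rep (k : ℕ) (a : ZMod 2) :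
    a :: a :: List.replicate k a = List.replicate k a ++ [a, a] := by
  rw [cons_rep, cons_rep_comm]

def Adj (x y : ℕ) : Prop := x = y + 1 ∨ y = x + 1

lemma Adj.symm {x y : ℕ} (h : Adj x y) : Adj y x := h.elim Or.inr Or.inl

lemma Adj.succ {x y : ℕ} (h : Adj x y) : Adj (x+1) (y+1) := by
  rcases h with h | h
  · exact Or.inl (by omega)
  · exact Or.inr (by omega)


lemma newWords_eq (n : ℕ) :
    newWords n = (List.range n).map (fun j => w 0 0 (wexcl n (j+1))) ++ [w 1 0 (wexcl n n)] := by
  unfold newWords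
  rw [List.range_succ, List.map_append]
  congr 1
  · apply List.map_congr_left
    intro j hj
    rw [List.mem_range] at hj
    have h1 : n - j = (n - (j+1)) + 1 := by omega
    rw [h1]
    simp [w, wexcl, List.replicate_succ, List.append_assoc]
  · simp [w, wexcl, List.replicate_succ, List.append_assoc]

lemma D_newWords (n j : ℕ) (hj : j + 1 ≤ n) :
    D ((newWords n).getD j []) ((newWords n).getD (j+1) []) (n-1-j) := by
  have hlen : (newWords n).length = n + 1 := by simp [newWords]
  have hj1 : j < (List.range (n+1)).length := by simp; omega
  have hj2 : j + 1 < (List.range (n+1)).length := by simp; omega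
  have e1 : (newWords n).getD j [] =
      List.replicate (n-j) (0:ZMod 2) ++ List.replicate (j+1) 1 ++ [0] ++
        List.replicate n 1 ++ [0] := by
    unfold newWords
    rw [List.getD_eq_getElem _ _ (by simpa [newWords] using hj1), List.getElem_map]
    simp
  have e2 : (newWords n).getD (j+1) [] =
      List.replicate (n-(j+1)) (0:ZMod 2) ++ List.replicate (j+2) 1 ++ [0] ++
        List.replicate n 1 ++ [0] := by
    unfold newWords
    rw [List.getD_eq_getElem _ _ (by simpa [newWords] using hj2), List.getElem_map]
    simp
  rw [e1, e2]
  refine ⟨List.replicate (n-(j+1)) (0:ZMod 2), 0,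
    List.replicate (j+1) 1 ++ ([0] ++ (List.replicate n 1 ++ [0])), by simp; omega, ?_, ?_⟩
  · have h1 : n - j = (n - (j+1)) + 1 := by omega
    rw [h1]
    simp [List.replicate_succ', List.append_assoc]
  · have : (0:ZMod 2) + 1 = 1 := rfl
    rw [this]
    simp [show List.replicate (j+2) (1:ZMod 2) = 1 :: List.replicate (j+1) 1 from rfl,
      List.append_assoc]

lemma steps_range (f : ℕ → Wd) (g : ℕ → ℕ) :
    ∀ N : ℕ, (∀ j, j < N → D (f j) (f (j+1)) (g j)) →
      Steps ((List.range (N+1)).map f) ((List.range N).map g) := by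
  intro N
  induction N with
  | zero => intro _; exact Steps.single (f 0)
  | succ N ih =>
    intro h
    have hS := ih (fun j hj => h j (by omega))
    have hlast : ((List.range (N+1)).map f).getLast? = some (f N) := by
      rw [List.getLast?_map, List.range_succ]
      simp
    have := hS.snoc hlast (h N (by omega))
    have hr : (List.range (N+1+1)).map f = (List.range (N+1)).map f ++ [f (N+1)] := by
      rw [List.range_succ]; simp
    have hr2 : (List.range (N+1)).map g = (List.range N).map g ++ [g N] := by
      rw [List.range_succ]; simp
    rw [hr, hr2]; exact this

lemma steps_newWords (n : ℕ) (hn : 1 ≤ n) :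
    Steps (newWords n) ((List.range n).map (fun j => n - 1 - j)) := by
  have h := steps_range (fun j => (newWords n).getD j []) (fun j => n - 1 - j) n
    (fun j hj => D_newWords n j (by omega))
  have hlen : (newWords n).length = n + 1 := by simp [newWords]
  have : (List.range (n+1)).map (fun j => (newWords n).getD j []) = newWords n := by
    apply List.ext_getElem
    · simp [hlen]
    · intro i h1 h2
      simp only [List.getElem_map, List.getElem_range]
      rw [List.getD_eq_getElem _ _ (by omega)]
  rw [this] at h
  exact h

def Inv (n : ℕ) : Prop := ∃ T : List ℕ,
  (∀ c ∈ c3A n, c.length = 2*n+1) ∧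
  n + 3 ≤ (c3A n).length ∧
  (c3A n).Nodup ∧
  (∀ j, j ≤ n+2 → (c3A n).getD j [] = List.replicate (2*n+1-j) 0 ++ List.replicate j 1) ∧
  (∀ j, 1 ≤ j → j ≤ n → wexcl n j ∉ c3A n) ∧
  Steps (c3A n) T ∧ List.Chain' Adj T ∧ T.head? = some (2*n) ∧ T.getLast? = some 0

lemma inv_one : Inv 1 := by
  refine ⟨[2,1,0], ?_, ?_, ?_, ?_, ?_, ?_, ?_, rfl, rfl⟩
  · intro c hc; fin_cases hc <;> rfl
  · decide
  · decide
  · intro j hj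
    interval_cases j <;> decide
  · intro j h1 h2
    interval_cases j
    decide
  · refine Steps.cons ⟨[0,0], 0, [], rfl, rfl, by decide⟩
      (Steps.cons ⟨[0], 0, [1], rfl, rfl, by decide⟩
        (Steps.cons ⟨[], 0, [1,1], rfl, rfl, by decide⟩ (Steps.single _)))
  · exact List.isChain_cons_cons.2 ⟨Or.inl rfl, List.isChain_cons_cons.2 ⟨Or.inl rfl, List.IsChain.singleton _⟩⟩


lemma c3A_succ_succ (m : ℕ) :
    c3A (m+2) = (buildB3 (c3A (m+1)) (2*m+5)).take ((buildB3 (c3A (m+1)) (2*m+5)).length - m)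
      ++ newWords (m+1) := rfl

lemma inv_step (m : ℕ) (ih : Inv (m+1)) : Inv (m+2) := by
  obtain ⟨T, hlen, hlong, hnd, hpre, hexcl, hS, hC, hTh, hTl⟩ := ih
  set A := c3A (m+1) with hAdef
  have ha : m + 4 ≤ A.length := hlong
  have hTlen : A.length = T.length + 1 := hS.length_eq
  obtain ⟨A0, Atl, hAcons⟩ : ∃ x l, A = x :: l := by
    cases hA : A with
    | nil => rw [hA] at ha; simp at ha
    | cons x l => exact ⟨x, l, rfl⟩
  have hA0 : A0 = List.replicate (2*m+3) (0:ZMod 2) := by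
    have := hpre 0 (by omega)
    rw [hAcons] at this
    simpa [show 2*(m+1)+1 = 2*m+3 by omega] using this
  obtain ⟨L, hL⟩ : ∃ L, A.getLast? = some L := by
    rw [hAcons]; exact ⟨_, List.getLast?_eq_getLast (by simp)⟩
  have hsplit : A.tail.reverse = (A.drop (m+1)).reverse ++ (A.tail.take m).reverse := by
    conv_lhs => rw [← List.take_append_drop m A.tail]
    rw [List.reverse_append, List.drop_tail]
  have hB : buildB3 A (2*m+5) =
      (List.replicate (2*m+5) (0:ZMod 2) ::
        (A.map (w 0 1) ++ (A.reverse.map (w 1 1) ++ (A.map (w 1 0) ++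
          ((A.drop (m+1)).reverse.map (w 0 0)))))) ++ (A.tail.take m).reverse.map (w 0 0) := by
    unfold buildB3
    rw [hsplit, List.map_append]
    simp only [List.cons_append, List.append_assoc]
    rfl
  have hdl : ((A.tail.take m).reverse.map (w 0 0)).length = m := by
    simp [List.length_take, List.length_tail]; omega
  have hA' : c3A (m+2) =
      List.replicate (2*m+5) (0:ZMod 2) ::
        (A.map (w 0 1) ++ (A.reverse.map (w 1 1) ++ (A.map (w 1 0) ++
          (((A.drop (m+1)).reverse.map (w 0 0)) ++ newWords (m+1))))) := by
    rw [c3A_succ_succ, ← hAdef, hB, List.length_append, hdl, Nat.add_sub_cancel,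
      List.take_left, List.cons_append, List.append_assoc, List.append_assoc,
      List.append_assoc]
  -- abbreviations
  set z := List.replicate (2*m+5) (0:ZMod 2) with hz
  set b1 := A.map (w 0 1) with hb1
  set b2 := A.reverse.map (w 1 1) with hb2
  set b3 := A.map (w 1 0) with hb3
  set b4 := (A.drop (m+1)).reverse.map (w 0 0) with hb4
  set nw := newWords (m+1) with hnw
  -- head/last facts
  have hAh : A.head? = some A0 := by rw [hAcons]; rfl
  have hb1h : b1.head? = some (w 0 1 A0) := by rw [hb1, List.head?_map, hAh]; rfl
  have hb1l : b1.getLast? = some (w 0 1 L) := by rw [hb1, List.getLast?_map, hL]; rfl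
  have hb2h : b2.head? = some (w 1 1 L) := by
    rw [hb2, List.head?_map, List.head?_reverse, hL]; rfl
  have hb2l : b2.getLast? = some (w 1 1 A0) := by
    rw [hb2, List.getLast?_map, List.getLast?_reverse, hAh]; rfl
  have hb3h : b3.head? = some (w 1 0 A0) := by rw [hb3, List.head?_map, hAh]; rfl
  have hb3l : b3.getLast? = some (w 1 0 L) := by rw [hb3, List.getLast?_map, hL]; rfl
  have hdropl : (A.drop (m+1)).getLast? = some L := by
    rw [List.getLast?_drop, if_neg (by omega)]; exact hL
  have hdroph : (A.drop (m+1)).head? = some (A.getD (m+1) []) := by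
    rw [List.head?_drop, List.getElem?_eq_getElem (by omega),
      ← List.getD_eq_getElem A [] (by omega)]
  have hb4h : b4.head? = some (w 0 0 L) := by
    rw [hb4, List.head?_map, List.head?_reverse, hdropl]; rfl
  have hb4l : b4.getLast? = some (w 0 0 (A.getD (m+1) [])) := by
    rw [hb4, List.getLast?_map, List.getLast?_reverse, hdroph]; rfl
  have hnwh : nw.head? = some (w 0 0 (wexcl (m+1) 1)) := by
    rw [hnw, newWords_eq, List.head?_append_of_ne_nil _ (by simp), List.head?_map,
      List.head?_range]
    simp
  have hnwl : nw.getLast? = some (w 1 0 (wexcl (m+1) (m+1))) := by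
    rw [hnw, newWords_eq, List.getLast?_concat]
  -- word values
  have hAm1 : A.getD (m+1) [] =
      List.replicate (m+2) (0:ZMod 2) ++ List.replicate (m+1) 1 := by
    have := hpre (m+1) (by omega)
    rw [this]
    congr 1
    congr 1
    omega
  have hAm2 : A.getD (m+2) [] =
      List.replicate (m+1) (0:ZMod 2) ++ List.replicate (m+2) 1 := by
    have := hpre (m+2) (by omega)
    rw [this]
    congr 1
    congr 1
    omega
  have hDm : D (A.getD (m+1) []) (A.getD (m+2) []) (m+1) := by
    refine ⟨List.replicate (m+1) (0:ZMod 2), 0, List.replicate (m+1) 1, by simp, ?_, ?_⟩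
    · rw [hAm1, show m+2 = (m+1)+1 from rfl, List.replicate_succ']
      simp [List.append_assoc]
    · rw [hAm2, show m+2 = (m+1)+1 from rfl]
      simp [List.replicate_succ]
  have hTm : T.getD (m+1) 0 = m+1 := (hS.getD (m+1) (by omega)).unique hDm
  have hTdh : (T.drop (m+1)).head? = some (m+1) := by
    rw [List.head?_drop, List.getElem?_eq_getElem (show m+1 < T.length by omega),
      ← List.getD_eq_getElem T 0 (by omega), hTm]
  have hTdl : (T.drop (m+1)).getLast? = some 0 := by
    rw [List.getLast?_drop, if_neg (by omega)]; exact hTl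
  -- steps of blocks
  have hS1 : Steps b1 (T.map (·+1)) := hS.map _ _ (fun c d k h => h.wrap 0 1)
  have hS2 : Steps b2 (T.reverse.map (·+1)) := hS.reverse.map _ _ (fun c d k h => h.wrap 1 1)
  have hS3 : Steps b3 (T.map (·+1)) := hS.map _ _ (fun c d k h => h.wrap 1 0)
  have hS4 : Steps b4 ((T.drop (m+1)).reverse.map (·+1)) :=
    ((hS.drop (m+1) (by omega)).reverse).map _ _ (fun c d k h => h.wrap 0 0)
  have hS5 : Steps nw ((List.range (m+1)).map (fun j => m+1-1-j)) :=
    steps_newWords (m+1) (by omega)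
  -- junctions
  have hJ0 : D z (w 0 1 A0) (2*m+4) := by
    refine ⟨List.replicate (2*m+4) (0:ZMod 2), 0, [], by simp, ?_, ?_⟩
    · rw [hz, show 2*m+5 = (2*m+4)+1 from rfl, List.replicate_succ']
    · rw [hA0]
      simp [w, show 2*m+4 = (2*m+3)+1 from rfl, List.replicate_succ]
  have hJ1 : D (w 0 1 L) (w 1 1 L) 0 :=
    ⟨[], 0, L ++ [1], rfl, by simp [w], by simp [w]⟩
  have hJ2 : D (w 1 1 A0) (w 1 0 A0) (2*m+4) := by
    refine ⟨1 :: List.replicate (2*m+3) (0:ZMod 2), 1, [], by simp, ?_, ?_⟩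
    · rw [hA0]; simp [w, List.replicate_succ]
    · rw [hA0]
      simp [w, List.replicate_succ, show (1:ZMod 2)+1 = 0 from rfl]
  have hJ3 : D (w 1 0 L) (w 0 0 L) 0 :=
    ⟨[], 1, L ++ [0], rfl, by simp [w], by simp [w, show (1:ZMod 2)+1 = 0 from rfl]⟩
  have hJ4 : D (w 0 0 (A.getD (m+1) [])) (w 0 0 (wexcl (m+1) 1)) (m+1) := by
    refine ⟨List.replicate (m+1) (0:ZMod 2), 0,
      0 :: List.replicate (m+1) 1 ++ [0], by simp, ?_, ?_⟩
    · rw [hAm1, show m+2 = (m+1)+1 from rfl, List.replicate_succ']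
      simp [w, List.append_assoc, cons_rep_comm]
    · rw [wexcl, show m+1-1 = m from rfl,
        show List.replicate (m+1) (0:ZMod 2) = 0 :: List.replicate m 0 from rfl]
      simp [w, List.append_assoc]
  -- membership in newWords
  have hnwmem : ∀ x ∈ nw, (∃ j, j < m+1 ∧ x = w 0 0 (wexcl (m+1) (j+1))) ∨
      x = w 1 0 (wexcl (m+1) (m+1)) := by
    intro x hx
    rw [hnw, newWords_eq] at hx
    rcases List.mem_append.1 hx with hx | hx
    · obtain ⟨j, hj, rfl⟩ := List.mem_map.1 hx
      exact Or.inl ⟨j, List.mem_range.1 hj, rfl⟩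
    · simp at hx; exact Or.inr hx
  have hzw : z = w 0 0 (List.replicate (2*m+3) 0) := by
    rw [hz, show 2*m+5 = (2*m+4)+1 from rfl, List.replicate_succ,
      show 2*m+4 = (2*m+3)+1 from rfl, List.replicate_succ']
    rfl
  have hA0drop : A0 ∉ A.drop (m+1) := by
    intro hmem
    have h1 : A.drop (m+1) = Atl.drop m := by rw [hAcons]; rfl
    rw [h1] at hmem
    have : A0 ∈ Atl := List.drop_subset _ _ hmem
    rw [hAcons, List.nodup_cons] at hnd
    exact hnd.1 this
  have hTne : T ≠ [] := by
    intro h; rw [h] at hTlen; simp at hTlen; omega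
  have hwx1 : ∀ j, 1 ≤ j → j ≤ m+1 → wexcl (m+2) j = w 0 1 (wexcl (m+1) j) := by
    intro j h1 h2
    rw [wexcl, wexcl, show m+2-j = (m+1-j)+1 by omega, List.replicate_succ,
      show m+2 = (m+1)+1 from rfl, List.replicate_succ']
    simp [w, List.append_assoc]
  have hwx2 : wexcl (m+2) (m+2) = w 1 1 (wexcl (m+1) (m+1)) := by
    rw [wexcl, wexcl, show m+2-(m+2) = 0 by omega, show m+1-(m+1) = 0 by omega,
      show m+2 = (m+1)+1 from rfl, List.replicate_succ]
    simp [w, cons_rep_comm, two_cons_rep, List.append_assoc, List.replicate_succ]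
  refine ⟨(2*m+4) :: (T.map (·+1) ++ 0 :: (T.reverse.map (·+1) ++ (2*m+4) ::
      (T.map (·+1) ++ 0 :: ((T.drop (m+1)).reverse.map (·+1) ++ (m+1) ::
        (List.range (m+1)).map (fun j => m+1-1-j))))), ?_, ?_, ?_, ?_, ?_, ?_, ?_, ?_, ?_⟩
  · -- lengths of codewords
    rw [hA']
    intro c hc
    rcases List.mem_cons.1 hc with rfl | hc
    · simp [hz]; omega
    rcases List.mem_append.1 hc with hc | hc
    · obtain ⟨c', hc', rfl⟩ := List.mem_map.1 hc
      rw [w_length, hlen c' hc']; ring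
    rcases List.mem_append.1 hc with hc | hc
    · obtain ⟨c', hc', rfl⟩ := List.mem_map.1 hc
      rw [w_length, hlen c' (List.mem_reverse.1 hc')]; ring
    rcases List.mem_append.1 hc with hc | hc
    · obtain ⟨c', hc', rfl⟩ := List.mem_map.1 hc
      rw [w_length, hlen c' hc']; ring
    rcases List.mem_append.1 hc with hc | hc
    · obtain ⟨c', hc', rfl⟩ := List.mem_map.1 hc
      rw [w_length, hlen c' (List.drop_subset _ _ (List.mem_reverse.1 hc'))]; ring
    · rw [hnw, newWords] at hc
      obtain ⟨j, hj, rfl⟩ := List.mem_map.1 hc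
      have hj' : j < m+2 := List.mem_range.1 hj
      simp only [List.length_append, List.length_replicate, List.length_cons,
        List.length_nil]
      omega
  · -- length bound
    rw [hA']
    have hnwlen : nw.length = m+2 := by simp [hnw, newWords]
    simp only [hb1, hb2, hb3, hb4, List.length_cons, List.length_append, List.length_map,
      List.length_reverse, List.length_drop, hnwlen]
    omega
  · -- nodup
    rw [hA']
    rw [List.nodup_cons]
    constructor
    · intro hzm
      rcases List.mem_append.1 hzm with h | hzm
      · obtain ⟨c', hc', he⟩ := List.mem_map.1 h
        exact w_ne_last (by decide) (he.trans hzw)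
      rcases List.mem_append.1 hzm with h | hzm
      · obtain ⟨c', hc', he⟩ := List.mem_map.1 h
        exact w_ne_head (by decide) (he.trans hzw)
      rcases List.mem_append.1 hzm with h | hzm
      · obtain ⟨c', hc', he⟩ := List.mem_map.1 h
        exact w_ne_head (by decide) (he.trans hzw)
      rcases List.mem_append.1 hzm with h | hzm
      · obtain ⟨c', hc', he⟩ := List.mem_map.1 h
        have hc'' : c' = List.replicate (2*m+3) 0 := (w_inj (he.trans hzw)).2.1
        apply hA0drop
        rw [hA0, ← hc'']
        exact List.mem_reverse.1 hc'
      · rcases hnwmem _ hzm with ⟨i, hi, he⟩ | he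
        · have h2 := (w_inj (hzw.symm.trans he)).2.1
          exact wexcl_ne_zeroword (m+1) (i+1) (2*m+3) (by omega) h2.symm
        · exact w_ne_head (by decide) (hzw.symm.trans he)
    · rw [List.nodup_append, List.nodup_append, List.nodup_append, List.nodup_append]
      refine ⟨hnd.map (w_injective 0 1),
        ⟨(List.nodup_reverse.2 hnd).map (w_injective 1 1),
          ⟨hnd.map (w_injective 1 0),
            ⟨(List.nodup_reverse.2 (hnd.sublist (List.drop_sublist (m+1) A))).map
                (w_injective 0 0),
              ?_, ?_⟩, ?_⟩, ?_⟩, ?_⟩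
      · -- nodup nw
        rw [hnw, newWords_eq, List.nodup_append]
        refine ⟨?_, List.nodup_singleton _, ?_⟩
        · refine List.Nodup.map_on ?_ List.nodup_range
          intro x hx y hy he
          have := wexcl_inj (w_inj he).2.1
          omega
        · intro x hx _ hx2 rfl
          obtain ⟨i, hi, rfl⟩ := List.mem_map.1 hx
          simp only [List.mem_singleton] at hx2
          exact w_ne_head (by decide) hx2
      · -- disjoint b4 nw
        intro x hx _ hx2 rfl
        obtain ⟨c', hc', rfl⟩ := List.mem_map.1 hx
        rcases hnwmem _ hx2 with ⟨i, hi, he⟩ | he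
        · have h2 : c' = wexcl (m+1) (i+1) := (w_inj he).2.1
          exact hexcl (i+1) (by omega) (by omega)
            (h2 ▸ List.drop_subset _ _ (List.mem_reverse.1 hc'))
        · exact w_ne_head (by decide) he
      · -- disjoint b3 (b4 ++ nw)
        intro x hx _ hx2 rfl
        obtain ⟨c', hc', rfl⟩ := List.mem_map.1 hx
        rcases List.mem_append.1 hx2 with h | h
        · obtain ⟨c'', hc'', he⟩ := List.mem_map.1 h
          exact w_ne_head (by decide) he
        · rcases hnwmem _ h with ⟨i, hi, he⟩ | he
          · exact w_ne_head (by decide) he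
          · have h2 : c' = wexcl (m+1) (m+1) := (w_inj he).2.1
            exact hexcl (m+1) (by omega) (by omega) (h2 ▸ hc')
      · -- disjoint b2 (b3 ++ (b4 ++ nw))
        intro x hx _ hx2 rfl
        obtain ⟨c', hc', rfl⟩ := List.mem_map.1 hx
        rcases List.mem_append.1 hx2 with h | hx2
        · obtain ⟨c'', hc'', he⟩ := List.mem_map.1 h
          exact w_ne_last (by decide) he
        rcases List.mem_append.1 hx2 with h | hx2
        · obtain ⟨c'', hc'', he⟩ := List.mem_map.1 h
          exact w_ne_last (by decide) he
        · rcases hnwmem _ hx2 with ⟨i, hi, he⟩ | he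
          · exact w_ne_last (by decide) he
          · exact w_ne_last (by decide) he
      · -- disjoint b1 rest
        intro x hx _ hx2 rfl
        obtain ⟨c', hc', rfl⟩ := List.mem_map.1 hx
        rcases List.mem_append.1 hx2 with h | hx2
        · obtain ⟨c'', hc'', he⟩ := List.mem_map.1 h
          exact w_ne_head (by decide) he
        rcases List.mem_append.1 hx2 with h | hx2
        · obtain ⟨c'', hc'', he⟩ := List.mem_map.1 h
          exact w_ne_last (by decide) he
        rcases List.mem_append.1 hx2 with h | hx2
        · obtain ⟨c'', hc'', he⟩ := List.mem_map.1 h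
          exact w_ne_last (by decide) he
        · rcases hnwmem _ hx2 with ⟨i, hi, he⟩ | he
          · exact w_ne_last (by decide) he
          · exact w_ne_last (by decide) he

  · -- prefixes
    rw [hA']
    intro j hj
    match j with
    | 0 => simp [hz, show 2*(m+2)+1-0 = 2*m+5 by omega]
    | (i+1) =>
      have hia : i < A.length := by omega
      have e0 : (z :: (b1 ++ (b2 ++ (b3 ++ (b4 ++ nw))))).getD (i+1) [] = b1.getD i [] := by
        rw [List.getD_cons_succ, List.getD_append _ _ _ _ (by rw [hb1, List.length_map]; omega)]
      rw [e0, hb1, List.getD_eq_getElem _ _ (by simpa using hia), List.getElem_map,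
        ← List.getD_eq_getElem A [] hia, hpre i (by omega),
        show 2*(m+2)+1-(i+1) = (2*(m+1)+1-i)+1 by omega, List.replicate_succ,
        List.replicate_succ' (n := i)]
      simp [w, List.append_assoc]
  · -- exclusion
    rw [hA']
    intro j hj1 hj2 hmem
    rcases Nat.lt_or_ge j (m+2) with hjc | hjc
    · have hf := hwx1 j hj1 (by omega)
      rw [hf] at hmem
      rcases List.mem_cons.1 hmem with heq | hmem
      · exact w_ne_last (by decide) (heq.trans hzw)
      rcases List.mem_append.1 hmem with h | hmem
      · obtain ⟨c', hc', he⟩ := List.mem_map.1 h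
        exact hexcl j hj1 (by omega) (((w_inj he).2.1) ▸ hc')
      rcases List.mem_append.1 hmem with h | hmem
      · obtain ⟨c', hc', he⟩ := List.mem_map.1 h
        exact w_ne_head (by decide) he
      rcases List.mem_append.1 hmem with h | hmem
      · obtain ⟨c', hc', he⟩ := List.mem_map.1 h
        exact w_ne_last (by decide) he
      rcases List.mem_append.1 hmem with h | hmem
      · obtain ⟨c', hc', he⟩ := List.mem_map.1 h
        exact w_ne_last (by decide) he
      · rcases hnwmem _ hmem with ⟨i, hi, he⟩ | he
        · exact w_ne_last (by decide) he
        · exact w_ne_last (by decide) he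
    · have hjeq : j = m+2 := by omega
      subst hjeq
      rw [hwx2] at hmem
      rcases List.mem_cons.1 hmem with heq | hmem
      · exact w_ne_head (by decide) (heq.trans hzw)
      rcases List.mem_append.1 hmem with h | hmem
      · obtain ⟨c', hc', he⟩ := List.mem_map.1 h
        exact w_ne_head (by decide) he
      rcases List.mem_append.1 hmem with h | hmem
      · obtain ⟨c', hc', he⟩ := List.mem_map.1 h
        exact hexcl (m+1) (by omega) (by omega)
          (((w_inj he).2.1) ▸ (List.mem_reverse.1 hc'))
      rcases List.mem_append.1 hmem with h | hmem
      · obtain ⟨c', hc', he⟩ := List.mem_map.1 h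
        exact w_ne_last (by decide) he
      rcases List.mem_append.1 hmem with h | hmem
      · obtain ⟨c', hc', he⟩ := List.mem_map.1 h
        exact w_ne_last (by decide) he
      · rcases hnwmem _ hmem with ⟨i, hi, he⟩ | he
        · exact w_ne_head (by decide) he
        · exact w_ne_last (by decide) he

  · -- Steps
    rw [hA']
    have st45 := hS4.append hS5 hb4l hnwh hJ4
    have hb4ne : b4 ≠ [] := by
      have hlb : b4.length = A.length - (m+1) := by simp [hb4]
      intro h; rw [h] at hlb; simp at hlb; omega
    have st345 := hS3.append st45 hb3l
      (by rw [List.head?_append_of_ne_nil _ hb4ne]; exact hb4h) hJ3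
    have hb3ne : b3 ≠ [] := by rw [hb3, hAcons]; simp
    have st2345 := hS2.append st345 hb2l
      (by rw [List.head?_append_of_ne_nil _ hb3ne]; exact hb3h) hJ2
    have hb2ne : b2 ≠ [] := by rw [hb2, hAcons]; simp
    have st12345 := hS1.append st2345 hb1l
      (by rw [List.head?_append_of_ne_nil _ hb2ne]; exact hb2h) hJ1
    have hb1ne : b1 ≠ [] := by rw [hb1, hAcons]; simp
    have stall := (Steps.single z).append st12345 rfl
      (by rw [List.head?_append_of_ne_nil _ hb1ne]; exact hb1h) hJ0
    simpa using stall
  · -- chain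
    have hC1 : List.Chain' Adj (T.map (·+1)) :=
      (List.isChain_map _).2 (hC.imp fun a b h => h.succ)
    have hC2 : List.Chain' Adj (T.reverse.map (·+1)) :=
      (List.isChain_map _).2 (List.isChain_reverse.2 (hC.imp fun a b h => h.symm.succ))
    have hC4 : List.Chain' Adj ((T.drop (m+1)).reverse.map (·+1)) :=
      (List.isChain_map _).2 (List.isChain_reverse.2 ((hC.drop (m+1)).imp fun a b h => h.symm.succ))
    have hC5 : List.Chain' Adj ((List.range (m+1)).map (fun j => m+1-1-j)) :=
      (List.isChain_map _).2 ((List.isChain_range_succ _ m).2 (fun j hj => Or.inl (by omega)))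
    have hS1h : (T.map (·+1)).head? = some (2*(m+1)+1) := by
      rw [List.head?_map, hTh]; rfl
    have hS1l : (T.map (·+1)).getLast? = some 1 := by
      rw [List.getLast?_map, hTl]; rfl
    have hS2h : (T.reverse.map (·+1)).head? = some 1 := by
      rw [List.head?_map, List.head?_reverse, hTl]; rfl
    have hS2l : (T.reverse.map (·+1)).getLast? = some (2*(m+1)+1) := by
      rw [List.getLast?_map, List.getLast?_reverse, hTh]; rfl
    have hS4h : ((T.drop (m+1)).reverse.map (·+1)).head? = some 1 := by
      rw [List.head?_map, List.head?_reverse, hTdl]; rfl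
    have hS4l : ((T.drop (m+1)).reverse.map (·+1)).getLast? = some (m+2) := by
      rw [List.getLast?_map, List.getLast?_reverse, hTdh]; rfl
    have hS5h : ((List.range (m+1)).map (fun j => m+1-1-j)).head? = some m := by
      rw [List.head?_map, List.head?_range, if_neg (by omega)]; rfl
    have hS5l : ((List.range (m+1)).map (fun j => m+1-1-j)).getLast? = some 0 := by
      rw [List.getLast?_map, List.range_succ, List.getLast?_concat]
      simp
    have hS1ne : T.map (·+1) ≠ [] := fun h => hTne (by simpa using h)
    have hTdne : T.drop (m+1) ≠ [] := by
      intro h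
      have := congrArg List.length h
      simp at this; omega
    have hS4ne : (T.drop (m+1)).reverse.map (·+1) ≠ [] := by
      intro h; apply hTdne; simpa using h
    have c5 : List.Chain' Adj ((m+1) :: (List.range (m+1)).map (fun j => m+1-1-j)) := by
      refine List.isChain_cons.2 ⟨?_, hC5⟩
      intro y hy
      rw [hS5h] at hy
      simp at hy; subst hy
      exact Or.inl (by omega)
    have c45 : List.Chain' Adj ((T.drop (m+1)).reverse.map (·+1) ++
        (m+1) :: (List.range (m+1)).map (fun j => m+1-1-j)) := by
      refine List.isChain_append.2 ⟨hC4, c5, ?_⟩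
      intro x hx y hy
      rw [hS4l] at hx; simp at hx; subst hx
      simp at hy; subst hy
      exact Or.inl (by omega)
    have c045 : List.Chain' Adj (0 :: ((T.drop (m+1)).reverse.map (·+1) ++
        (m+1) :: (List.range (m+1)).map (fun j => m+1-1-j))) := by
      refine List.isChain_cons.2 ⟨?_, c45⟩
      intro y hy
      rw [List.head?_append_of_ne_nil _ hS4ne, hS4h] at hy
      simp at hy; subst hy
      exact Or.inr rfl
    have c3r : List.Chain' Adj (T.map (·+1) ++ 0 :: ((T.drop (m+1)).reverse.map (·+1) ++
        (m+1) :: (List.range (m+1)).map (fun j => m+1-1-j))) := by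
      refine List.isChain_append.2 ⟨hC1, c045, ?_⟩
      intro x hx y hy
      rw [hS1l] at hx; simp at hx; subst hx
      simp at hy; subst hy
      exact Or.inl rfl
    have c23 : List.Chain' Adj ((2*m+4) :: (T.map (·+1) ++ 0 ::
        ((T.drop (m+1)).reverse.map (·+1) ++
          (m+1) :: (List.range (m+1)).map (fun j => m+1-1-j)))) := by
      refine List.isChain_cons.2 ⟨?_, c3r⟩
      intro y hy
      rw [List.head?_append_of_ne_nil _ hS1ne, hS1h] at hy
      simp at hy; subst hy
      exact Or.inl (by omega)
    have c2r : List.Chain' Adj (T.reverse.map (·+1) ++ (2*m+4) :: (T.map (·+1) ++ 0 ::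
        ((T.drop (m+1)).reverse.map (·+1) ++
          (m+1) :: (List.range (m+1)).map (fun j => m+1-1-j)))) := by
      refine List.isChain_append.2 ⟨hC2, c23, ?_⟩
      intro x hx y hy
      rw [hS2l] at hx; simp at hx; subst hx
      simp at hy; subst hy
      exact Or.inr (by omega)
    have c02 : List.Chain' Adj (0 :: (T.reverse.map (·+1) ++ (2*m+4) :: (T.map (·+1) ++ 0 ::
        ((T.drop (m+1)).reverse.map (·+1) ++
          (m+1) :: (List.range (m+1)).map (fun j => m+1-1-j))))) := by
      refine List.isChain_cons.2 ⟨?_, c2r⟩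
      intro y hy
      rw [List.head?_append_of_ne_nil _ (fun h => hTne (by simpa using h)), hS2h] at hy
      simp at hy; subst hy
      exact Or.inr rfl
    have c1r : List.Chain' Adj (T.map (·+1) ++ 0 :: (T.reverse.map (·+1) ++ (2*m+4) ::
        (T.map (·+1) ++ 0 :: ((T.drop (m+1)).reverse.map (·+1) ++
          (m+1) :: (List.range (m+1)).map (fun j => m+1-1-j))))) := by
      refine List.isChain_append.2 ⟨hC1, c02, ?_⟩
      intro x hx y hy
      rw [hS1l] at hx; simp at hx; subst hx
      simp at hy; subst hy
      exact Or.inl rfl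
    refine List.isChain_cons.2 ⟨?_, c1r⟩
    intro y hy
    rw [List.head?_append_of_ne_nil _ hS1ne, hS1h] at hy
    simp at hy; subst hy
    exact Or.inl (by omega)
  · -- head
    simp only [List.head?_cons, Option.some.injEq]
    omega
  · -- last
    have hS5l : ((List.range (m+1)).map (fun j => m+1-1-j)).getLast? = some 0 := by
      rw [List.getLast?_map, List.range_succ, List.getLast?_concat]
      simp
    have e1 : ((m+1) :: (List.range (m+1)).map (fun j => m+1-1-j)).getLast? = some 0 := by
      rcases hr : (List.range (m+1)).map (fun j => m+1-1-j) with _ | ⟨x, xs⟩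
      · rw [hr] at hS5l; simp at hS5l
      · rw [List.getLast?_cons_cons, ← hr]; exact hS5l
    have e2 : ((T.drop (m+1)).reverse.map (·+1) ++
        (m+1) :: (List.range (m+1)).map (fun j => m+1-1-j)).getLast? = some 0 := by
      rw [List.getLast?_append, e1]; rfl
    have e3 : (0 :: ((T.drop (m+1)).reverse.map (·+1) ++
        (m+1) :: (List.range (m+1)).map (fun j => m+1-1-j))).getLast? = some 0 := by
      rcases hr : (T.drop (m+1)).reverse.map (·+1) ++
          (m+1) :: (List.range (m+1)).map (fun j => m+1-1-j) with _ | ⟨x, xs⟩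
      · simp at hr
      · rw [List.getLast?_cons_cons, ← hr]; exact e2
    have e4 : (T.map (·+1) ++ 0 :: ((T.drop (m+1)).reverse.map (·+1) ++
        (m+1) :: (List.range (m+1)).map (fun j => m+1-1-j))).getLast? = some 0 := by
      rw [List.getLast?_append, e3]; rfl
    have e5 : ((2*m+4) :: (T.map (·+1) ++ 0 :: ((T.drop (m+1)).reverse.map (·+1) ++
        (m+1) :: (List.range (m+1)).map (fun j => m+1-1-j)))).getLast? = some 0 := by
      rcases hr : T.map (·+1) ++ 0 :: ((T.drop (m+1)).reverse.map (·+1) ++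
          (m+1) :: (List.range (m+1)).map (fun j => m+1-1-j)) with _ | ⟨x, xs⟩
      · simp at hr
      · rw [List.getLast?_cons_cons, ← hr]; exact e4
    have e6 : (T.reverse.map (·+1) ++ (2*m+4) :: (T.map (·+1) ++ 0 ::
        ((T.drop (m+1)).reverse.map (·+1) ++
          (m+1) :: (List.range (m+1)).map (fun j => m+1-1-j)))).getLast? = some 0 := by
      rw [List.getLast?_append, e5]; rfl
    have e7 : (0 :: (T.reverse.map (·+1) ++ (2*m+4) :: (T.map (·+1) ++ 0 ::
        ((T.drop (m+1)).reverse.map (·+1) ++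
          (m+1) :: (List.range (m+1)).map (fun j => m+1-1-j))))).getLast? = some 0 := by
      rcases hr : T.reverse.map (·+1) ++ (2*m+4) :: (T.map (·+1) ++ 0 ::
          ((T.drop (m+1)).reverse.map (·+1) ++
            (m+1) :: (List.range (m+1)).map (fun j => m+1-1-j))) with _ | ⟨x, xs⟩
      · simp at hr
      · rw [List.getLast?_cons_cons, ← hr]; exact e6
    have e8 : (T.map (·+1) ++ 0 :: (T.reverse.map (·+1) ++ (2*m+4) :: (T.map (·+1) ++ 0 ::
        ((T.drop (m+1)).reverse.map (·+1) ++
          (m+1) :: (List.range (m+1)).map (fun j => m+1-1-j))))).getLast? = some 0 := by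
      rw [List.getLast?_append, e7]; rfl
    rcases hr : T.map (·+1) ++ 0 :: (T.reverse.map (·+1) ++ (2*m+4) :: (T.map (·+1) ++ 0 ::
        ((T.drop (m+1)).reverse.map (·+1) ++
          (m+1) :: (List.range (m+1)).map (fun j => m+1-1-j)))) with _ | ⟨x, xs⟩
    · simp at hr
    · rw [List.getLast?_cons_cons, ← hr]; exact e8




lemma inv_all (n : ℕ) (hn : 1 ≤ n) : Inv n := by
  obtain ⟨k, rfl⟩ : ∃ k, n = k + 1 := ⟨n-1, by omega⟩
  induction k with
  | zero => exact inv_one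
  | succ j ihj => exact inv_step j (ihj (by omega))

end SkewAux

open SkewAux in
theorem stmt9 : ∀ n : ℕ, 1 ≤ n →
    (∀ c ∈ c3A n, c.length = 2*n+1) ∧
    (∀ j : ℕ, 1 ≤ j → j ≤ n →
      (List.replicate (n-j) (0 : ZMod 2) ++ List.replicate j 1 ++ [0] ++
        List.replicate n 1) ∉ c3A n) ∧
    ∃ δ : ℕ → ℤ, PathGrayZ (c3A n) (n+1) δ ∧
      (∀ i, i + 2 < (c3A n).length → |δ i - δ (i+1)| = 1) ∧
      δ 0 = (n : ℤ) ∧ δ ((c3A n).length - 2) = -(n : ℤ) := by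
  intro n hn
  obtain ⟨T, hlen, hlong, hnd, hpre, hexcl, hS, hC, hTh, hTl⟩ := inv_all n hn
  have hTlen : (c3A n).length = T.length + 1 := hS.length_eq
  have hTne : T ≠ [] := by
    intro h; rw [h] at hTlen; simp at hTlen; omega
  refine ⟨hlen, hexcl, fun i => (T.getD i 0 : ℤ) - n, ⟨hnd, ?_⟩, ?_, ?_, ?_⟩
  · intro i hi
    refine ⟨T.getD i 0 + 1, by push_cast; ring, ?_⟩
    exact (hS.getD i hi).transAt
  · intro i hi
    have hi' : i < T.length - 1 := by omega
    have hadj : Adj (T.getD i 0) (T.getD (i+1) 0) := by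
      have h := List.isChain_iff_getElem.1 hC i (by omega)
      rwa [← List.getD_eq_getElem T 0 (by omega), ← List.getD_eq_getElem T 0 (by omega)] at h
    have hx : ((T.getD i 0 : ℤ) - n) - ((T.getD (i+1) 0 : ℤ) - n) =
        (T.getD i 0 : ℤ) - (T.getD (i+1) 0 : ℤ) := by ring
    rw [hx]
    rcases hadj with h | h
    · rw [show (T.getD i 0 : ℤ) = (T.getD (i+1) 0 : ℤ) + 1 by exact_mod_cast h]
      simp
    · rw [show (T.getD (i+1) 0 : ℤ) = (T.getD i 0 : ℤ) + 1 by exact_mod_cast h]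
      simp
  · have h0 : T.getD 0 0 = 2*n := by
      rcases T with _ | ⟨t, ts⟩
      · simp at hTne
      · simp at hTh; simpa using hTh
    show (T.getD 0 0 : ℤ) - n = n
    rw [h0]; push_cast; ring
  · have hl : T.getD (T.length - 1) 0 = 0 := by
      rw [List.getLast?_eq_getElem?, List.getElem?_eq_getElem (by
        have := List.length_pos_of_ne_nil hTne; omega)] at hTl
      rw [List.getD_eq_getElem _ _ (by have := List.length_pos_of_ne_nil hTne; omega)]
      simpa using hTl
    show (T.getD ((c3A n).length - 2) 0 : ℤ) - n = -(n:ℤ)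
    rw [hTlen, show T.length + 1 - 2 = T.length - 1 by omega, hl]
    simp
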